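/- Let f ∈ C([0,1],ℝ) and for n ∈ ℕ set ℰₙ(f) = 2ⁿ Σ_{i=0}^{2ⁿ−1} (f((i+1)2^{−n}) − f(i2^{−n}))²/2. Then supₙ ℰₙ(f) < ∞ if and only if f belongs to H¹((0,1)) (i.e., f has a weak derivative f′ ∈ L²((0,1))), and in that case supₙ ℰₙ(f) = limₙ ℰₙ(f) = (1/2)∫₀¹ f′(x)² dx. -/

import Mathlib

open MeasureTheory
open scoped ENNReal
open scoped RealInnerProductSpace

noncomputable section

/-- Discrete Dirichlet energy of `f : [0,1] → ℝ` on the uniform grid of mesh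
`2⁻ⁿ` (each edge counted once). -/
def gridEf (n : ℕ) (f : ℝ → ℝ) : ℝ :=
  2 ^ n * ∑ i ∈ Finset.range (2 ^ n),
    (f ((i + 1 : ℕ) / 2 ^ n) - f ((i : ℕ) / 2 ^ n)) ^ 2 / 2

/-- `f ∈ H¹((0,1))`: there is a weak derivative `g ∈ L²((0,1))`, i.e. `f` is the
indefinite integral of some square-integrable `g`. -/
def MemH1 (f : ℝ → ℝ) : Prop :=
  ∃ g : ℝ → ℝ,
    MemLp g 2 (volume.restrict (Set.Ioo (0:ℝ) 1)) ∧
    ∀ x ∈ Set.Icc (0:ℝ) 1, f x = f 0 + ∫ t in (0:ℝ)..x, g t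

namespace S15

abbrev μ01 : Measure ℝ := volume.restrict (Set.Ioo (0:ℝ) 1)

instance : IsProbabilityMeasure μ01 := ⟨by simp [Real.volume_Ioo]⟩

/-- increments of `f` on the level-`n` dyadic grid -/
def af (f : ℝ → ℝ) (n i : ℕ) : ℝ := f (((i:ℝ)+1)/2^n) - f ((i:ℝ)/2^n)

/-- dyadic step function at level `m` with values `c i` on `[i/2^m, (i+1)/2^m)` -/
def stepc (m : ℕ) (c : ℕ → ℝ) : ℝ → ℝ :=
  fun t => c (min (⌊(2:ℝ)^m * t⌋.toNat) (2^m - 1))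

/-- coefficients of the discrete gradient of `f` at level `n` -/
def cf (f : ℝ → ℝ) (n : ℕ) : ℕ → ℝ := fun i => 2^n * af f n i

/-- twice the discrete Dirichlet energy -/
def En (f : ℝ → ℝ) (n : ℕ) : ℝ :=
  ∑ j ∈ Finset.range (2^n), (2^n * af f n j) * af f n j

lemma floor_eq {m : ℕ} {i : ℕ} {t : ℝ} (h1 : (i:ℝ)/2^m ≤ t)
    (h2 : t < ((i:ℝ)+1)/2^m) : ⌊(2:ℝ)^m * t⌋ = i := by
  have hp : (0:ℝ) < 2^m := by positivity
  rw [Int.floor_eq_iff]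
  constructor
  · push_cast
    calc (i:ℝ) = ((i:ℝ)/2^m) * 2^m := by field_simp
    _ ≤ t * 2^m := by nlinarith
    _ = 2^m * t := by ring
  · push_cast
    calc (2:ℝ)^m * t < 2^m * (((i:ℝ)+1)/2^m) := by nlinarith
    _ = (i:ℝ)+1 := by field_simp

lemma stepc_eq {m i : ℕ} (hi : i < 2^m) (c : ℕ → ℝ) {t : ℝ}
    (h1 : (i:ℝ)/2^m ≤ t) (h2 : t < ((i:ℝ)+1)/2^m) : stepc m c t = c i := by
  unfold stepc
  rw [floor_eq h1 h2]
  congr 1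
  simp [Int.toNat_natCast]
  omega

lemma stepc_bound (m : ℕ) (c : ℕ → ℝ) (t : ℝ) :
    |stepc m c t| ≤ ∑ i ∈ Finset.range (2^m), |c i| := by
  unfold stepc
  apply Finset.single_le_sum (f := fun i => |c i|) (fun i _ => abs_nonneg _)
  have h2 : 0 < 2^m := Nat.pow_pos (by norm_num)
  simp only [Finset.mem_range]
  omega

lemma measurable_stepc (m : ℕ) (c : ℕ → ℝ) : Measurable (stepc m c) := by
  unfold stepc
  exact (measurable_from_top (f := fun k : ℤ => c (min k.toNat (2^m-1)))).comp
    (Int.measurable_floor.comp (measurable_id.const_mul _))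

lemma memℒp_stepc (m : ℕ) (c : ℕ → ℝ) : MemLp (stepc m c) 2 μ01 :=
  MemLp.of_bound (measurable_stepc m c).aestronglyMeasurable _
    (Filter.Eventually.of_forall fun t => by
      simpa using stepc_bound m c t)

lemma integrable_of_μ01 {v : ℝ → ℝ} (hv : MemLp v 2 μ01) : Integrable v μ01 :=
  (hv.mono_exponent (by norm_num)).integrable le_rfl

lemma intervalIntegrable_of_μ01 {v : ℝ → ℝ} (hv : Integrable v μ01) {a b : ℝ}
    (h0 : 0 ≤ a) (hab : a ≤ b) (hb : b ≤ 1) : IntervalIntegrable v volume a b := by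
  rw [intervalIntegrable_iff_integrableOn_Ioc_of_le hab]
  have h : IntegrableOn v (Set.Ioo (0:ℝ) 1) volume := hv
  apply h.mono_set_ae
  unfold Filter.EventuallyLE; rw [ae_iff]
  refine measure_mono_null ?_ (measure_singleton (1:ℝ))
  intro x hx
  simp only [Set.mem_setOf_eq] at hx
  simp only [Set.mem_singleton_iff]
  by_contra hx1
  apply hx
  intro hxab
  exact ⟨h0.trans_lt hxab.1, lt_of_le_of_ne (hxab.2.trans hb) hx1⟩

lemma grid_le_one {n q : ℕ} (hq : q ≤ 2^n) : (q:ℝ)/2^n ≤ 1 := by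
  rw [div_le_one (by positivity)]
  exact_mod_cast hq

lemma grid_mono {n p q : ℕ} (hpq : p ≤ q) : (p:ℝ)/2^n ≤ (q:ℝ)/2^n := by
  have : (p:ℝ) ≤ (q:ℝ) := by exact_mod_cast hpq
  gcongr

lemma sum_integral_dyadic (v : ℝ → ℝ) (hv : Integrable v μ01) {n p q : ℕ}
    (hpq : p ≤ q) (hq : q ≤ 2^n) :
    ∫ t in ((p:ℝ)/2^n)..((q:ℝ)/2^n), v t
      = ∑ k ∈ Finset.range (q-p),
          ∫ t in (((p+k : ℕ):ℝ)/2^n)..((((p+k : ℕ):ℝ)+1)/2^n), v t := by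
  have key := intervalIntegral.sum_integral_adjacent_intervals
    (a := fun k => (((p+k : ℕ):ℝ)/2^n)) (μ := volume) (f := v) (n := q - p) ?_
  · have e0 : (((p + 0 : ℕ):ℝ)/2^n) = (p:ℝ)/2^n := by norm_num
    have e1 : (((p + (q-p) : ℕ):ℝ)/2^n) = (q:ℝ)/2^n := by
      congr 2
      push_cast [Nat.add_sub_cancel' hpq]
      ring
    rw [e0, e1] at key
    rw [← key]
    apply Finset.sum_congr rfl
    intro k _
    congr 1
    push_cast
    ring
  · intro k hk
    apply intervalIntegrable_of_μ01 hv (by positivity) (grid_mono (by omega))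
      (grid_le_one (n := n) (by omega))

lemma integral_stepc_mul_interval {m : ℕ} (c : ℕ → ℝ) {i : ℕ} (hi : i < 2^m)
    (v : ℝ → ℝ) :
    ∫ t in ((i:ℝ)/2^m)..(((i:ℝ)+1)/2^m), stepc m c t * v t
      = c i * ∫ t in ((i:ℝ)/2^m)..(((i:ℝ)+1)/2^m), v t := by
  have hab : (i:ℝ)/2^m ≤ ((i:ℝ)+1)/2^m := by gcongr; linarith
  rw [intervalIntegral.integral_of_le hab, intervalIntegral.integral_of_le hab,
    MeasureTheory.integral_Ioc_eq_integral_Ioo, MeasureTheory.integral_Ioc_eq_integral_Ioo,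
    ← MeasureTheory.integral_const_mul]
  apply MeasureTheory.setIntegral_congr_fun measurableSet_Ioo
  intro t ht
  simp only
  rw [stepc_eq hi c ht.1.le ht.2]

lemma integral_hh_interval (f : ℝ → ℝ) (n : ℕ) {k : ℕ} (hk : k < 2^n) :
    ∫ t in ((k:ℝ)/2^n)..(((k:ℝ)+1)/2^n), stepc n (cf f n) t = af f n k := by
  have : ∀ t, stepc n (cf f n) t = stepc n (cf f n) t * (fun _ => (1:ℝ)) t := by
    intro t; simp
  rw [intervalIntegral.integral_congr (fun t _ => this t),
    integral_stepc_mul_interval _ hk]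
  rw [intervalIntegral.integral_const]
  have h2 : ((k:ℝ)+1)/2^n - (k:ℝ)/2^n = 1/2^n := by ring
  rw [h2]
  simp only [smul_eq_mul, cf]
  field_simp

lemma integrable_stepc (m : ℕ) (c : ℕ → ℝ) : Integrable (stepc m c) μ01 :=
  integrable_of_μ01 (memℒp_stepc m c)

lemma integral_hh_grid (f : ℝ → ℝ) {m n : ℕ} (hmn : m ≤ n) {j : ℕ} (hj : j < 2^m) :
    ∫ t in ((j:ℝ)/2^m)..(((j:ℝ)+1)/2^m), stepc n (cf f n) t = af f m j := by
  have hint : Integrable (stepc n (cf f n)) μ01 := integrable_stepc n _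
  obtain ⟨d, rfl⟩ : ∃ d, n = m + d := ⟨n - m, by omega⟩
  set p := j * 2^d with hp
  set q := (j+1) * 2^d with hq
  have hq2 : q ≤ 2^(m+d) := by
    rw [hq, pow_add]
    exact Nat.mul_le_mul (by omega) le_rfl
  have hpq : p ≤ q := Nat.mul_le_mul (by omega) le_rfl
  have epj : ((p:ℕ):ℝ)/2^(m+d) = (j:ℝ)/2^m := by
    push_cast [hp]
    rw [pow_add]
    field_simp
  have eqj : ((q:ℕ):ℝ)/2^(m+d) = ((j:ℝ)+1)/2^m := by
    push_cast [hq]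
    rw [pow_add]
    field_simp
  rw [← epj, ← eqj, sum_integral_dyadic _ hint hpq hq2]
  have hqp : q - p = 2^d := by rw [hp, hq, Nat.add_mul, one_mul, Nat.add_sub_cancel_left]
  rw [hqp]
  have hterm : ∀ k ∈ Finset.range (2^d),
      (∫ t in (((p+k : ℕ):ℝ)/2^(m+d))..((((p+k : ℕ):ℝ)+1)/2^(m+d)), stepc (m+d) (cf f (m+d)) t)
        = (fun k => f (((p+k : ℕ):ℝ)/2^(m+d))) (k+1) - (fun k => f (((p+k : ℕ):ℝ)/2^(m+d))) k := by
    intro k hk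
    have hpk : p + k < 2^(m+d) := by
      have := Finset.mem_range.1 hk
      omega
    rw [integral_hh_interval f (m+d) hpk]
    simp only [af]
    congr 2
    push_cast
    ring
  rw [Finset.sum_congr rfl hterm, Finset.sum_range_sub (fun k => f (((p+k : ℕ):ℝ)/2^(m+d)))]
  simp only [Nat.add_zero]
  rw [show p + 2^d = q by rw [hp, hq, Nat.add_mul, one_mul], eqj, epj]
  rfl

lemma integrable_stepc_mul {m : ℕ} (c : ℕ → ℝ) {v : ℝ → ℝ} (hv : Integrable v μ01) :
    Integrable (fun t => stepc m c t * v t) μ01 :=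
  hv.bdd_mul (measurable_stepc m c).aestronglyMeasurable
    (Filter.Eventually.of_forall fun t => by simpa using stepc_bound m c t)

/-- Master lemma: integral of a level-`m` step function against `v`. -/
lemma integral_stepc_mul (m : ℕ) (c : ℕ → ℝ) (v : ℝ → ℝ) (hv : Integrable v μ01) :
    ∫ t in Set.Ioo (0:ℝ) 1, stepc m c t * v t
      = ∑ j ∈ Finset.range (2^m),
          c j * ∫ t in ((j:ℝ)/2^m)..(((j:ℝ)+1)/2^m), v t := by
  have hint : Integrable (fun t => stepc m c t * v t) μ01 := integrable_stepc_mul c hv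
  have h1 : ∫ t in Set.Ioo (0:ℝ) 1, stepc m c t * v t
      = ∫ t in ((0:ℝ))..(1:ℝ), stepc m c t * v t := by
    rw [intervalIntegral.integral_of_le (by norm_num),
      MeasureTheory.integral_Ioc_eq_integral_Ioo]
  have h0 : ((0:ℕ):ℝ)/2^m = (0:ℝ) := by norm_num
  have h2 : (((2^m : ℕ)):ℝ)/2^m = (1:ℝ) := by
    push_cast; field_simp
  have key := sum_integral_dyadic (fun t => stepc m c t * v t) hint
    (Nat.zero_le (2^m)) (le_rfl : 2^m ≤ 2^m)
  rw [h0, h2] at key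
  rw [h1, key]
  simp only [Nat.sub_zero, Nat.zero_add]
  apply Finset.sum_congr rfl
  intro j hj
  exact integral_stepc_mul_interval c (Finset.mem_range.1 hj) v

lemma inner_toLp {u v : ℝ → ℝ} (hu : MemLp u 2 μ01) (hv : MemLp v 2 μ01) :
    ⟪hu.toLp u, hv.toLp v⟫ = ∫ t in Set.Ioo (0:ℝ) 1, u t * v t := by
  rw [MeasureTheory.L2.inner_def]
  apply MeasureTheory.integral_congr_ae
  filter_upwards [hu.coeFn_toLp, hv.coeFn_toLp] with t h1 h2
  simp [h1, h2, RCLike.inner_apply, mul_comm]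

lemma norm_sq_toLp {u : ℝ → ℝ} (hu : MemLp u 2 μ01) :
    ‖hu.toLp u‖^2 = ∫ t in Set.Ioo (0:ℝ) 1, u t * u t := by
  rw [← real_inner_self_eq_norm_sq, inner_toLp hu hu]

/-- Lp elements of step functions -/
def SLp (m : ℕ) (c : ℕ → ℝ) : Lp ℝ 2 μ01 := (memℒp_stepc m c).toLp (stepc m c)

/-- Lp element of the discrete gradient -/
def HLp (f : ℝ → ℝ) (n : ℕ) : Lp ℝ 2 μ01 := SLp n (cf f n)

lemma inner_SLp_toLp (f : ℝ → ℝ) {m : ℕ} (c : ℕ → ℝ) {v : ℝ → ℝ} (hv : MemLp v 2 μ01)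
    (hP : ∀ j : ℕ, j < 2^m → ∫ t in ((j:ℝ)/2^m)..(((j:ℝ)+1)/2^m), v t = af f m j) :
    ⟪SLp m c, hv.toLp v⟫ = ∑ j ∈ Finset.range (2^m), c j * af f m j := by
  rw [SLp, inner_toLp, integral_stepc_mul m c v (integrable_of_μ01 hv)]
  exact Finset.sum_congr rfl fun j hj => by rw [hP j (Finset.mem_range.1 hj)]

lemma inner_SLp_HLp (f : ℝ → ℝ) {m n : ℕ} (hmn : m ≤ n) (c : ℕ → ℝ) :
    ⟪SLp m c, HLp f n⟫ = ∑ j ∈ Finset.range (2^m), c j * af f m j :=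
  inner_SLp_toLp f c (memℒp_stepc n (cf f n)) (fun j hj => integral_hh_grid f hmn hj)

lemma En_eq_sum (f : ℝ → ℝ) (n : ℕ) :
    ∑ j ∈ Finset.range (2^n), cf f n j * af f n j = En f n := rfl

lemma inner_HLp_HLp (f : ℝ → ℝ) {m n : ℕ} (hmn : m ≤ n) :
    ⟪HLp f n, HLp f m⟫ = En f m := by
  rw [real_inner_comm, HLp, inner_SLp_HLp f hmn, En_eq_sum]

lemma norm_sq_HLp (f : ℝ → ℝ) (n : ℕ) : ‖HLp f n‖^2 = En f n := by
  rw [← real_inner_self_eq_norm_sq, ← En_eq_sum, HLp]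
  exact inner_SLp_HLp f le_rfl (cf f n)

lemma haf_g (f g : ℝ → ℝ) (hg : Integrable g μ01)
    (hFTC : ∀ x ∈ Set.Icc (0:ℝ) 1, f x = f 0 + ∫ t in (0:ℝ)..x, g t)
    {m j : ℕ} (hj : j < 2^m) :
    ∫ t in ((j:ℝ)/2^m)..(((j:ℝ)+1)/2^m), g t = af f m j := by
  have hj1 : ((j:ℝ)+1)/2^m = (((j+1:ℕ)):ℝ)/2^m := by push_cast; ring
  have h0j : (0:ℝ) ≤ (j:ℝ)/2^m := by positivity
  have hjle : (j:ℝ)/2^m ≤ ((j:ℝ)+1)/2^m := by gcongr; linarith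
  have hle1 : ((j:ℝ)+1)/2^m ≤ 1 := by
    rw [hj1]; exact grid_le_one (by omega)
  have hmem1 : (j:ℝ)/2^m ∈ Set.Icc (0:ℝ) 1 := ⟨h0j, hjle.trans hle1⟩
  have hmem2 : ((j:ℝ)+1)/2^m ∈ Set.Icc (0:ℝ) 1 := ⟨h0j.trans hjle, hle1⟩
  have e1 := hFTC _ hmem1
  have e2 := hFTC _ hmem2
  have hadd := intervalIntegral.integral_add_adjacent_intervals
    (a := (0:ℝ)) (b := (j:ℝ)/2^m) (c := ((j:ℝ)+1)/2^m) (f := g) (μ := volume)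
    (intervalIntegrable_of_μ01 hg le_rfl h0j (hjle.trans hle1))
    (intervalIntegrable_of_μ01 hg h0j hjle hle1)
  rw [af, e1, e2]
  linarith [hadd]
lemma eLpNorm_density (g : ℝ → ℝ) (hg : MemLp g 2 μ01) {ε : ℝ} (hε : 0 < ε) :
    ∃ m c, eLpNorm (fun t => g t - stepc m c t) 2 μ01 ≤ ENNReal.ofReal ε := by
  -- extend by zero
  set G0 : ℝ → ℝ := (Set.Ioo (0:ℝ) 1).indicator g with hG0def
  have hG0 : MemLp G0 2 volume := by
    constructor
    · exact (aestronglyMeasurable_indicator_iff measurableSet_Ioo).2 hg.1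
    · rw [hG0def, eLpNorm_indicator_eq_eLpNorm_restrict measurableSet_Ioo]
      exact hg.2
  -- continuous compactly supported approximation
  obtain ⟨w, hwcs, hww, hwc, -⟩ :=
    hG0.exists_hasCompactSupport_eLpNorm_sub_le (by norm_num : (2:ℝ≥0∞) ≠ ∞)
      (ε := ENNReal.ofReal (ε/2)) (by simp only [ne_eq, ENNReal.ofReal_eq_zero, not_le]; linarith)
  have hgw : eLpNorm (fun t => g t - w t) 2 μ01 ≤ ENNReal.ofReal (ε/2) := by
    have h1 : (fun t => g t - w t) =ᵐ[μ01] (fun t => G0 t - w t) := by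
      filter_upwards [ae_restrict_mem measurableSet_Ioo] with t ht
      simp [hG0def, Set.indicator_of_mem ht]
    rw [eLpNorm_congr_ae h1]
    refine le_trans (eLpNorm_mono_measure _ Measure.restrict_le_self) ?_
    exact le_trans (le_of_eq (by rfl)) hww
  -- uniform continuity
  have hwu : UniformContinuous w := hwcs.uniformContinuous_of_continuous hwc
  obtain ⟨δ, hδ, hδw⟩ := Metric.uniformContinuous_iff.1 hwu (ε/2) (by linarith)
  obtain ⟨m, hm⟩ : ∃ m : ℕ, ((1:ℝ)/2) ^ m < δ := exists_pow_lt_of_lt_one hδ (by norm_num)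
  set c : ℕ → ℝ := fun i => w ((i:ℝ)/2^m) with hc
  have hws : ∀ t ∈ Set.Ioo (0:ℝ) 1, |w t - stepc m c t| ≤ ε/2 := by
    intro t ht
    have h2p : (0:ℝ) < 2^m := by positivity
    have hfl0 : (0:ℤ) ≤ ⌊(2:ℝ)^m * t⌋ := Int.floor_nonneg.2 (by nlinarith [ht.1])
    have hflt : ⌊(2:ℝ)^m * t⌋ < (2^m : ℕ) := by
      apply Int.floor_lt.2
      push_cast
      nlinarith [ht.2]
    set i : ℕ := ⌊(2:ℝ)^m * t⌋.toNat with hi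
    have hi2 : i < 2^m := by omega
    have hfl : ((i:ℕ):ℤ) = ⌊(2:ℝ)^m * t⌋ := Int.toNat_of_nonneg hfl0
    have h1 : (i:ℝ)/2^m ≤ t := by
      rw [div_le_iff₀ h2p]
      have := Int.floor_le ((2:ℝ)^m * t)
      rw [← hfl] at this
      push_cast at this
      linarith [this]
    have h2 : t < ((i:ℝ)+1)/2^m := by
      rw [lt_div_iff₀ h2p]
      have := Int.lt_floor_add_one ((2:ℝ)^m * t)
      rw [← hfl] at this
      push_cast at this
      linarith [this]
    rw [stepc_eq hi2 c h1 h2]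
    have hdist : dist t ((i:ℝ)/2^m) < δ := by
      rw [Real.dist_eq, abs_of_nonneg (by linarith)]
      have h2' : t < (i:ℝ)/2^m + 1/2^m := by
        rw [← add_div]
        exact h2
      calc t - (i:ℝ)/2^m < 1/2^m := by linarith
      _ = ((1:ℝ)/2)^m := by rw [div_pow, one_pow]
      _ < δ := hm
    have := hδw hdist
    rw [Real.dist_eq] at this
    exact le_of_lt (by simpa [hc] using this)
  have hwsnorm : eLpNorm (fun t => w t - stepc m c t) 2 μ01 ≤ ENNReal.ofReal (ε/2) := by
    have hb : ∀ᵐ t ∂μ01, ‖w t - stepc m c t‖ ≤ ε/2 := by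
      filter_upwards [ae_restrict_mem measurableSet_Ioo] with t ht
      simpa [Real.norm_eq_abs] using hws t ht
    refine le_trans (eLpNorm_le_of_ae_bound hb) (le_of_eq ?_)
    simp
  refine ⟨m, c, ?_⟩
  have heq : (fun t => g t - stepc m c t)
      = (fun t => g t - w t) + fun t => w t - stepc m c t := by
    funext t; simp
  rw [heq]
  have tri := eLpNorm_add_le
      ((hg.1).sub (hwc.aestronglyMeasurable.restrict))
      (((hwc.measurable.sub (measurable_stepc m c)).aestronglyMeasurable).restrict)
      (by norm_num : (1:ℝ≥0∞) ≤ 2)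
  refine le_trans tri ?_
  calc _ ≤ ENNReal.ofReal (ε/2) + ENNReal.ofReal (ε/2) := add_le_add hgw hwsnorm
  _ = ENNReal.ofReal ε := by rw [← ENNReal.ofReal_add (by linarith) (by linarith)]; norm_num


lemma Lp_density (g : ℝ → ℝ) (hg : MemLp g 2 μ01) {ε : ℝ} (hε : 0 < ε) :
    ∃ m c, ‖hg.toLp g - SLp m c‖ ≤ ε := by
  obtain ⟨m, c, hmc⟩ := eLpNorm_density g hg hε
  refine ⟨m, c, ?_⟩
  rw [SLp, ← MemLp.toLp_sub hg (memℒp_stepc m c), Lp.norm_toLp]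
  calc (eLpNorm (g - stepc m c) 2 μ01).toReal
      ≤ (ENNReal.ofReal ε).toReal := ENNReal.toReal_mono ENNReal.ofReal_ne_top hmc
    _ = ε := ENNReal.toReal_ofReal hε.le

lemma part2 (f g : ℝ → ℝ) (hg : MemLp g 2 μ01)
    (hFTC : ∀ x ∈ Set.Icc (0:ℝ) 1, f x = f 0 + ∫ t in (0:ℝ)..x, g t) :
    Filter.Tendsto (fun n => En f n) Filter.atTop
      (nhds (∫ t in Set.Ioo (0:ℝ) 1, g t * g t))
    ∧ ∀ n, En f n ≤ ∫ t in Set.Ioo (0:ℝ) 1, g t * g t := by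
  set G : Lp ℝ 2 μ01 := hg.toLp g with hG
  have hI : ∫ t in Set.Ioo (0:ℝ) 1, g t * g t = ‖G‖^2 := (norm_sq_toLp hg).symm
  have hinner_HG : ∀ n, ⟪HLp f n, G⟫ = En f n := by
    intro n
    rw [HLp, hG, inner_SLp_toLp f (cf f n) hg
      (fun j hj => haf_g f g (integrable_of_μ01 hg) hFTC hj), En_eq_sum]
  have hHle : ∀ n, ‖HLp f n‖ ≤ ‖G‖ := by
    intro n
    have h1 : ‖HLp f n‖^2 = ⟪HLp f n, G⟫ := by rw [norm_sq_HLp, hinner_HG]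
    have h2 : ⟪HLp f n, G⟫ ≤ ‖HLp f n‖ * ‖G‖ := real_inner_le_norm _ _
    nlinarith [norm_nonneg (HLp f n), norm_nonneg G]
  have hEle : ∀ n, En f n ≤ ‖G‖^2 := by
    intro n
    rw [← norm_sq_HLp f n]
    have := hHle n
    nlinarith [norm_nonneg (HLp f n)]
  have hmain : ∀ ε : ℝ, 0 < ε → ∃ M : ℕ, ∀ n ≥ M, ‖G‖^2 - En f n ≤ 2*‖G‖*ε := by
    intro ε hε
    obtain ⟨m, c, hmc⟩ := Lp_density g hg hε
    rw [← hG] at hmc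
    refine ⟨m, fun n hn => ?_⟩
    have hSH : ⟪SLp m c, HLp f n⟫ = ⟪SLp m c, G⟫ := by
      rw [inner_SLp_HLp f hn c, hG,
        inner_SLp_toLp f c hg (fun j hj => haf_g f g (integrable_of_μ01 hg) hFTC hj)]
    have horth : ⟪G - HLp f n, SLp m c⟫ = 0 := by
      rw [inner_sub_left, real_inner_comm (SLp m c) G,
        real_inner_comm (SLp m c) (HLp f n), hSH, sub_self]
    have hkey : ‖G‖^2 - En f n = ⟪G - HLp f n, G - SLp m c⟫ := by
      rw [inner_sub_right, horth, sub_zero, inner_sub_left,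
        real_inner_self_eq_norm_sq, hinner_HG]
    calc ‖G‖^2 - En f n = ⟪G - HLp f n, G - SLp m c⟫ := hkey
      _ ≤ ‖G - HLp f n‖ * ‖G - SLp m c‖ := real_inner_le_norm _ _
      _ ≤ (‖G‖ + ‖HLp f n‖) * ε := by
          apply mul_le_mul (norm_sub_le _ _) hmc (norm_nonneg _)
          positivity
      _ ≤ 2*‖G‖*ε := by nlinarith [hHle n, norm_nonneg G]
  constructor
  · rw [hI]
    rw [Metric.tendsto_atTop]
    intro ε' hε'
    have hGnn : (0:ℝ) ≤ ‖G‖ := norm_nonneg _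
    obtain ⟨M, hM⟩ := hmain (ε'/(2*‖G‖+1)) (by positivity)
    refine ⟨M, fun n hn => ?_⟩
    have h1 := hM n hn
    have h2 := hEle n
    rw [Real.dist_eq, abs_of_nonpos (by linarith)]
    have hlt : 2*‖G‖*(ε'/(2*‖G‖+1)) < ε' := by
      have hfac : 2*‖G‖/(2*‖G‖+1) < 1 := by
        rw [div_lt_one (by positivity)]
        linarith
      calc 2*‖G‖*(ε'/(2*‖G‖+1)) = ε' * (2*‖G‖/(2*‖G‖+1)) := by ring
        _ < ε' * 1 := by exact mul_lt_mul_of_pos_left hfac hε'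
        _ = ε' := mul_one _
    linarith
  · intro n
    rw [hI]
    exact hEle n
/-- hard direction -/
lemma part1 (f : ℝ → ℝ) (hf : ContinuousOn f (Set.Icc 0 1))
    (C : ℝ) (hbdd : ∀ n, En f n ≤ C) : MemH1 f := by
  -- the discrete gradients form a Cauchy sequence in L²
  have hEmono : Monotone (En f) := by
    intro m n hmn
    have h := norm_sub_sq_real (HLp f n) (HLp f m)
    rw [inner_HLp_HLp f hmn, norm_sq_HLp, norm_sq_HLp] at h
    nlinarith [sq_nonneg (‖HLp f n - HLp f m‖)]
  have hEcauchy : CauchySeq (En f) := by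
    have hbd : BddAbove (Set.range (En f)) := ⟨C, by rintro x ⟨n, rfl⟩; exact hbdd n⟩
    exact (tendsto_atTop_ciSup hEmono hbd).cauchySeq
  have hHcauchy : CauchySeq (HLp f) := by
    rw [Metric.cauchySeq_iff']
    intro ε hε
    obtain ⟨N, hN⟩ := Metric.cauchySeq_iff'.1 hEcauchy (ε^2) (by positivity)
    refine ⟨N, fun n hn => ?_⟩
    have h1 := hN n hn
    have h2 : ‖HLp f n - HLp f N‖^2 = En f n - En f N := by
      have h := norm_sub_sq_real (HLp f n) (HLp f N)
      rw [inner_HLp_HLp f hn, norm_sq_HLp, norm_sq_HLp] at h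
      linarith
    rw [Real.dist_eq, abs_of_nonneg (by linarith [hEmono hn])] at h1
    rw [dist_eq_norm]
    nlinarith [norm_nonneg (HLp f n - HLp f N), hε]
  obtain ⟨G, hGlim⟩ := cauchySeq_tendsto_of_complete hHcauchy
  -- the candidate weak derivative
  set g0 : ℝ → ℝ := ⇑G with hg0
  set gfun : ℝ → ℝ := (Set.Ioo (0:ℝ) 1).indicator g0 with hgfun
  have hae : gfun =ᵐ[μ01] g0 := by
    filter_upwards [ae_restrict_mem measurableSet_Ioo] with t ht
    simp [hgfun, Set.indicator_of_mem ht]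
  have hGmem : MemLp gfun 2 μ01 := (Lp.memLp G).ae_eq hae.symm
  have htoLp : hGmem.toLp gfun = G := by
    rw [MemLp.toLp_congr hGmem (Lp.memLp G) hae]
    exact Lp.toLp_coeFn G (Lp.memLp G)
  have hgint : Integrable gfun μ01 := integrable_of_μ01 hGmem
  -- per-interval integrals of gfun
  have hinterval : ∀ m : ℕ, ∀ i : ℕ, i < 2^m →
      ∫ t in ((i:ℝ)/2^m)..(((i:ℝ)+1)/2^m), gfun t = af f m i := by
    intro m i hi
    set c : ℕ → ℝ := fun k => if k = i then 1 else 0 with hc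
    have hSg : ⟪SLp m c, hGmem.toLp gfun⟫
        = ∫ t in ((i:ℝ)/2^m)..(((i:ℝ)+1)/2^m), gfun t := by
      rw [SLp, inner_toLp (memℒp_stepc m c) hGmem, integral_stepc_mul m c gfun hgint]
      simp [hc, ite_mul, Finset.sum_ite_eq', hi]
    have hconst : ∀ n ≥ m, ⟪SLp m c, HLp f n⟫ = af f m i := by
      intro n hn
      rw [inner_SLp_HLp f hn c]
      simp [hc, ite_mul, Finset.sum_ite_eq', hi]
    have hlim : Filter.Tendsto (fun n => ⟪SLp m c, HLp f n⟫) Filter.atTop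
        (nhds ⟪SLp m c, G⟫) := Filter.Tendsto.inner tendsto_const_nhds hGlim
    have hlim2 : Filter.Tendsto (fun n => ⟪SLp m c, HLp f n⟫) Filter.atTop
        (nhds (af f m i)) := by
      apply Filter.Tendsto.congr' (f₁ := fun _ => af f m i) _ tendsto_const_nhds
      filter_upwards [Filter.eventually_ge_atTop m] with n hn
      exact (hconst n hn).symm
    have := tendsto_nhds_unique hlim hlim2
    rw [← hSg, htoLp, this]
  -- dyadic FTC
  have hdyadic : ∀ m : ℕ, ∀ j : ℕ, j ≤ 2^m →
      f ((j:ℝ)/2^m) = f 0 + ∫ t in (0:ℝ)..((j:ℝ)/2^m), gfun t := by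
    intro m j hj
    have h0 : ((0:ℕ):ℝ)/2^m = (0:ℝ) := by norm_num
    have key := sum_integral_dyadic gfun hgint (Nat.zero_le j) hj
    rw [h0] at key
    simp only [Nat.sub_zero, Nat.zero_add] at key
    have hterm : ∀ k ∈ Finset.range j,
        (∫ t in (((k:ℕ):ℝ)/2^m)..((((k:ℕ):ℝ)+1)/2^m), gfun t)
          = (fun k => f (((k:ℕ):ℝ)/2^m)) (k+1) - (fun k => f (((k:ℕ):ℝ)/2^m)) k := by
      intro k hk
      have hk2 : k < 2^m := lt_of_lt_of_le (Finset.mem_range.1 hk) hj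
      rw [hinterval m k hk2]
      simp only [af]
      congr 2
      push_cast
      ring
    rw [Finset.sum_congr rfl hterm,
      Finset.sum_range_sub (fun k => f (((k:ℕ):ℝ)/2^m))] at key
    rw [key]
    norm_num
  -- global integrability and the primitive
  have hgint' : Integrable gfun volume := by
    rw [hgfun, integrable_indicator_iff measurableSet_Ioo]
    exact integrable_of_μ01 (Lp.memLp G)
  set F : ℝ → ℝ := fun x => ∫ t in (0:ℝ)..x, gfun t with hF
  have hFcont : Continuous F :=
    intervalIntegral.continuous_primitive (fun a b => hgint'.intervalIntegrable) 0
  refine ⟨gfun, hGmem, ?_⟩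
  intro x hx
  set u : ℕ → ℝ := fun k => ((⌊(2:ℝ)^k * x⌋.toNat : ℕ):ℝ)/2^k with hu
  have hflnn : ∀ k : ℕ, (0:ℤ) ≤ ⌊(2:ℝ)^k * x⌋ := by
    intro k
    exact Int.floor_nonneg.2 (by nlinarith [hx.1, (by positivity : (0:ℝ) < 2^k)])
  have hcast : ∀ k : ℕ, ((⌊(2:ℝ)^k * x⌋.toNat : ℕ):ℝ) = ((⌊(2:ℝ)^k * x⌋ : ℤ):ℝ) := by
    intro k
    exact_mod_cast congrArg (fun z : ℤ => (z:ℝ)) (Int.toNat_of_nonneg (hflnn k))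
  have hxk : ∀ k, f (u k) = f 0 + F (u k) := by
    intro k
    have h1 : (2:ℝ)^k * x ≤ 2^k := by nlinarith [hx.2, (by positivity : (0:ℝ) < 2^k)]
    have h2 : ⌊(2:ℝ)^k * x⌋ ≤ ((2^k : ℕ) : ℤ) := by
      calc ⌊(2:ℝ)^k * x⌋ ≤ ⌊((2^k : ℕ) : ℝ)⌋ := Int.floor_le_floor (by push_cast; exact h1)
      _ = ((2^k : ℕ) : ℤ) := Int.floor_natCast _
    exact hdyadic k _ (Int.toNat_le.2 h2)
  have huk1 : ∀ k, u k ≤ x := by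
    intro k
    have h2p : (0:ℝ) < 2^k := by positivity
    rw [hu]
    simp only []
    rw [div_le_iff₀ h2p, hcast k]
    have := Int.floor_le ((2:ℝ)^k * x)
    linarith
  have huk2 : ∀ k, x - (1/2:ℝ)^k ≤ u k := by
    intro k
    have h2p : (0:ℝ) < 2^k := by positivity
    rw [hu]
    simp only []
    rw [le_div_iff₀ h2p, hcast k]
    have hfl := Int.lt_floor_add_one ((2:ℝ)^k * x)
    have hone : ((1:ℝ)/2)^k * 2^k = 1 := by
      rw [div_pow, one_pow]
      field_simp
    nlinarith [hfl]
  have hulim : Filter.Tendsto u Filter.atTop (nhds x) := by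
    have hlower : Filter.Tendsto (fun k : ℕ => x - (1/2:ℝ)^k) Filter.atTop (nhds (x - 0)) :=
      tendsto_const_nhds.sub (tendsto_pow_atTop_nhds_zero_of_lt_one (by norm_num) (by norm_num))
    rw [sub_zero] at hlower
    exact tendsto_of_tendsto_of_tendsto_of_le_of_le hlower tendsto_const_nhds huk2 huk1
  have humem : ∀ k, u k ∈ Set.Icc (0:ℝ) 1 := by
    intro k
    refine ⟨by positivity, (huk1 k).trans hx.2⟩
  have hftend : Filter.Tendsto (fun k => f (u k)) Filter.atTop (nhds (f x)) := by
    apply ((hf x hx).tendsto).comp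
    rw [tendsto_nhdsWithin_iff]
    exact ⟨hulim, Filter.Eventually.of_forall humem⟩
  have hFtend : Filter.Tendsto (fun k => f 0 + F (u k)) Filter.atTop
      (nhds (f 0 + F x)) :=
    tendsto_const_nhds.add ((hFcont.tendsto x).comp hulim)
  exact tendsto_nhds_unique (hftend.congr hxk) hFtend

end S15


/-- For continuous `f : [0,1] → ℝ`, `supₙ ℰₙ(f) < ∞` iff
`f ∈ H¹((0,1))`, and in that case
`supₙ ℰₙ(f) = limₙ ℰₙ(f) = (1/2)∫₀¹ f′(x)² dx`. -/
theorem statement15 (f : ℝ → ℝ) (hf : ContinuousOn f (Set.Icc 0 1)) :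
    ((⨆ n : ℕ, ENNReal.ofReal (gridEf n f)) < ⊤ ↔ MemH1 f) ∧
    ∀ g : ℝ → ℝ,
      MemLp g 2 (volume.restrict (Set.Ioo (0:ℝ) 1)) →
      (∀ x ∈ Set.Icc (0:ℝ) 1, f x = f 0 + ∫ t in (0:ℝ)..x, g t) →
      Filter.Tendsto (fun n => gridEf n f) Filter.atTop
        (nhds ((1/2) * ∫ t in Set.Ioo (0:ℝ) 1, (g t) ^ 2)) ∧
      (⨆ n : ℕ, ENNReal.ofReal (gridEf n f))
        = ENNReal.ofReal ((1/2) * ∫ t in Set.Ioo (0:ℝ) 1, (g t) ^ 2) := by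
  have hEgrid : ∀ n, S15.En f n = 2 * gridEf n f := by
    intro n
    rw [S15.En, gridEf, Finset.mul_sum, Finset.mul_sum]
    apply Finset.sum_congr rfl
    intro i _
    rw [S15.af]
    have h1 : ((i:ℝ)+1)/2^n = ((i+1 : ℕ):ℝ)/2^n := by push_cast; ring
    rw [h1]
    ring
  have hgridnn : ∀ n, 0 ≤ gridEf n f := by
    intro n
    apply mul_nonneg (by positivity)
    apply Finset.sum_nonneg
    intro i _
    positivity
  have hmain : ∀ g : ℝ → ℝ, MemLp g 2 (volume.restrict (Set.Ioo (0:ℝ) 1)) →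
      (∀ x ∈ Set.Icc (0:ℝ) 1, f x = f 0 + ∫ t in (0:ℝ)..x, g t) →
      Filter.Tendsto (fun n => gridEf n f) Filter.atTop
        (nhds ((1/2) * ∫ t in Set.Ioo (0:ℝ) 1, (g t) ^ 2)) ∧
      (⨆ n : ℕ, ENNReal.ofReal (gridEf n f))
        = ENNReal.ofReal ((1/2) * ∫ t in Set.Ioo (0:ℝ) 1, (g t) ^ 2) := by
    intro g hg hFTC
    obtain ⟨htend, hle⟩ := S15.part2 f g hg hFTC
    have hInt : ∫ t in Set.Ioo (0:ℝ) 1, g t * g t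
        = ∫ t in Set.Ioo (0:ℝ) 1, (g t)^2 := by
      simp_rw [pow_two]
    rw [hInt] at htend hle
    have htend2 : Filter.Tendsto (fun n => gridEf n f) Filter.atTop
        (nhds ((1/2) * ∫ t in Set.Ioo (0:ℝ) 1, (g t)^2)) := by
      have h2 := htend.const_mul (1/2 : ℝ)
      refine h2.congr fun n => ?_
      rw [hEgrid n]
      ring
    have hgE : ∀ n, gridEf n f ≤ (1/2) * ∫ t in Set.Ioo (0:ℝ) 1, (g t)^2 := by
      intro n
      have h3 := hle n
      rw [hEgrid n] at h3
      linarith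
    refine ⟨htend2, le_antisymm (iSup_le fun n => ENNReal.ofReal_le_ofReal (hgE n)) ?_⟩
    have hof := (ENNReal.continuous_ofReal.tendsto _).comp htend2
    exact le_of_tendsto' hof (fun n => le_iSup (fun k => ENNReal.ofReal (gridEf k f)) n)
  refine ⟨⟨fun hsup => ?_, fun hH1 => ?_⟩, hmain⟩
  · set K := ⨆ n : ℕ, ENNReal.ofReal (gridEf n f) with hK
    have hKne : K ≠ ⊤ := hsup.ne
    apply S15.part1 f hf (2 * K.toReal)
    intro n
    rw [hEgrid n]
    have h1 : ENNReal.ofReal (gridEf n f) ≤ K :=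
      le_iSup (fun k => ENNReal.ofReal (gridEf k f)) n
    have h2 : gridEf n f ≤ K.toReal := (ENNReal.ofReal_le_iff_le_toReal hKne).1 h1
    linarith
  · obtain ⟨g, hg, hFTC⟩ := hH1
    rw [(hmain g hg hFTC).2]
    exact ENNReal.ofReal_lt_top

end
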